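/- If G is a non-complete double-critical k-chromatic graph, then the minimum degree of G is at least k + 1. -/

import Mathlib

open SimpleGraph

/-- A connected graph `G` with chromatic number `t` is double-critical if removing the two
ends of any edge decreases the chromatic number by two. -/
def DoubleCritical {V : Type*} (G : SimpleGraph V) (t : ℕ) : Prop :=
  G.Connected ∧ G.chromaticNumber = (t : ℕ∞) ∧
    ∀ u v : V, G.Adj u v →
      (G.induce ({u, v}ᶜ : Set V)).chromaticNumber = ((t - 2 : ℕ) : ℕ∞)

-- walk boundary lemma
lemma exists_boundary {V : Type} {G : SimpleGraph V} {S : Set V} {s z : V}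
    (p : G.Walk s z) : s ∈ S → z ∉ S → ∃ a b, G.Adj a b ∧ a ∈ S ∧ b ∉ S := by
  induction p with
  | nil => intro hs hz; exact absurd hs hz
  | @cons a b c h p ih =>
    intro hs hz
    by_cases hb : b ∈ S
    · exact ih hb hz
    · exact ⟨a, b, h, hs, hb⟩

lemma exists_adj_of_ne {V : Type} {G : SimpleGraph V} (hconn : G.Connected) {v w : V}
    (h : v ≠ w) : ∃ u, G.Adj v u := by
  obtain ⟨p⟩ := hconn.preconnected v w
  cases p with
  | nil => exact absurd rfl h
  | cons hadj _ => exact ⟨_, hadj⟩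


lemma commonNbr {V : Type} [Fintype V] (G : SimpleGraph V) [DecidableRel G.Adj] {k : ℕ}
    (hk : 3 ≤ k) (hchi : G.chromaticNumber = (k : ℕ∞)) {u v : V} (huv : G.Adj u v)
    (c : (G.induce ({u, v}ᶜ : Set V)).Coloring (Fin (k - 2))) (α : Fin (k - 2)) :
    ∃ w, ∃ h : w ∈ ({u, v}ᶜ : Set V), G.Adj u w ∧ G.Adj v w ∧ c ⟨w, h⟩ = α := by
  classical
  by_contra hA
  push_neg at hA
  have huvne : u ≠ v := G.ne_of_adj huv
  have hmem' : ∀ x : V, x ∈ ({u, v}ᶜ : Set V) → x ≠ u ∧ x ≠ v := by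
    intro x hx
    constructor <;> rintro rfl <;> simp at hx
  have hindadj : ∀ {a b : V} (ha : a ∈ ({u, v}ᶜ : Set V)) (hb : b ∈ ({u, v}ᶜ : Set V)),
      G.Adj a b → (G.induce ({u, v}ᶜ : Set V)).Adj ⟨a, ha⟩ ⟨b, hb⟩ := by
    intro a b ha hb hab
    exact hab
  set top : Fin (k - 1) := ⟨k - 2, by omega⟩ with htop
  set e : Fin (k - 2) → Fin (k - 1) := Fin.castLE (by omega) with he
  have etop : ∀ β : Fin (k - 2), e β ≠ top := by
    intro β h
    have h2 := β.isLt
    rw [Fin.ext_iff] at h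
    simp only [he, htop, Fin.coe_castLE] at h
    omega
  have einj : Function.Injective e := Fin.castLE_injective _
  set f : V → Fin (k - 1) := fun x =>
    if hx : x ∈ ({u, v}ᶜ : Set V) then
      (if c ⟨x, hx⟩ = α ∧ G.Adj v x then top else e (c ⟨x, hx⟩))
    else if x = v then e α else top with hf
  have hfu : f u = top := by
    have h1 : u ∉ ({u, v}ᶜ : Set V) := by simp
    simp only [hf, dif_neg h1, if_neg huvne]
  have hfv : f v = e α := by
    have h1 : v ∉ ({u, v}ᶜ : Set V) := by simp
    simp only [hf, dif_neg h1, if_pos rfl, if_true]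
  have key : ∀ a b : V, G.Adj a b → a ∈ ({u, v}ᶜ : Set V) → f a ≠ f b := by
    intro a b hab ha
    have hfa : f a = if c ⟨a, ha⟩ = α ∧ G.Adj v a then top else e (c ⟨a, ha⟩) := by
      simp only [hf, dif_pos ha]
    by_cases hb : b ∈ ({u, v}ᶜ : Set V)
    · have hfb : f b = if c ⟨b, hb⟩ = α ∧ G.Adj v b then top else e (c ⟨b, hb⟩) := by
        simp only [hf, dif_pos hb]
      have hcv : c ⟨a, ha⟩ ≠ c ⟨b, hb⟩ := c.valid (hindadj ha hb hab)
      by_cases ra : c ⟨a, ha⟩ = α ∧ G.Adj v a <;> by_cases rb : c ⟨b, hb⟩ = α ∧ G.Adj v b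
      · exact absurd (ra.1.trans rb.1.symm) hcv
      · rw [hfa, hfb, if_pos ra, if_neg rb]; exact (etop _).symm
      · rw [hfa, hfb, if_neg ra, if_pos rb]; exact etop _
      · rw [hfa, hfb, if_neg ra, if_neg rb]; exact fun h => hcv (einj h)
    · -- b = u or b = v
      have hb2 : b = u ∨ b = v := by
        by_contra h
        push_neg at h
        exact hb (by simp [h.1, h.2])
      rcases hb2 with hbe | hbe
      · -- b = u
        rw [hbe, hfu, hfa]
        by_cases ra : c ⟨a, ha⟩ = α ∧ G.Adj v a
        · exact fun _ => (hA a ha (hbe ▸ hab.symm) ra.2) ra.1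
        · rw [if_neg ra]; exact etop _
      · -- b = v
        rw [hbe, hfv, hfa]
        have hva : G.Adj v a := hbe ▸ hab.symm
        by_cases ra : c ⟨a, ha⟩ = α ∧ G.Adj v a
        · rw [if_pos ra]; exact (etop α).symm
        · rw [if_neg ra]
          intro h
          exact ra ⟨einj h, hva⟩
  have hvalid : ∀ {a b : V}, G.Adj a b → f a ≠ f b := by
    intro a b hab
    by_cases ha : a ∈ ({u, v}ᶜ : Set V)
    · exact key a b hab ha
    · by_cases hb : b ∈ ({u, v}ᶜ : Set V)
      · exact (key b a hab.symm hb).symm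
      · have ha2 : a = u ∨ a = v := by
          by_contra h; push_neg at h; exact ha (by simp [h.1, h.2])
        have hb2 : b = u ∨ b = v := by
          by_contra h; push_neg at h; exact hb (by simp [h.1, h.2])
        have hne := G.ne_of_adj hab
        rcases ha2 with hae | hae <;> rcases hb2 with hbe | hbe
        · rw [hae, hbe] at hne; exact absurd rfl hne
        · rw [hae, hbe, hfu, hfv]; exact (etop α).symm
        · rw [hae, hbe, hfu, hfv]; exact etop α
        · rw [hae, hbe] at hne; exact absurd rfl hne
  have hcolor : G.Colorable (k - 1) := ⟨SimpleGraph.Coloring.mk f hvalid⟩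
  have hle := hcolor.chromaticNumber_le
  rw [hchi] at hle
  have : k ≤ k - 1 := by exact_mod_cast hle
  omega

lemma no_clique {V : Type} [Fintype V] (G : SimpleGraph V) [DecidableRel G.Adj] {k : ℕ}
    (hk : 3 ≤ k) (hnc : G ≠ ⊤) (hconn : G.Connected)
    (hcol2 : ∀ u v : V, G.Adj u v → (G.induce ({u, v}ᶜ : Set V)).Colorable (k - 2))
    (S : Finset V) (hS : S.card = k)
    (hcl : ∀ a ∈ S, ∀ b ∈ S, a ≠ b → G.Adj a b) : False := by
  classical
  by_cases hall : ∀ x, x ∈ S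
  · apply hnc
    ext a b
    simp only [top_adj]
    exact ⟨G.ne_of_adj, fun h => hcl a (hall a) b (hall b) h⟩
  · push_neg at hall
    obtain ⟨z, hz⟩ := hall
    have hSne : S.Nonempty := by rw [← Finset.card_pos, hS]; omega
    obtain ⟨s, hs⟩ := hSne
    obtain ⟨p⟩ := hconn.preconnected s z
    have hzS : z ∉ (↑S : Set V) := by simpa using hz
    obtain ⟨a, b, hab, haS, hbS⟩ := exists_boundary (S := (↑S : Set V)) p (by simpa using hs) hzS
    rw [Finset.mem_coe] at haS
    obtain ⟨c⟩ := hcol2 a b hab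
    have hbS' : b ∉ S := by simpa using hbS
    have hmemT : ∀ x ∈ S.erase a, x ∈ ({a, b}ᶜ : Set V) := by
      intro x hx
      have h1 : x ≠ a := Finset.ne_of_mem_erase hx
      have h2 : x ≠ b := by
        rintro rfl
        exact hbS' (Finset.mem_of_mem_erase hx)
      simp [h1, h2]
    have hne2 : Nonempty (Fin (k - 2)) := ⟨⟨0, by omega⟩⟩
    set f : V → Fin (k - 2) := fun x =>
      if hx : x ∈ ({a, b}ᶜ : Set V) then c ⟨x, hx⟩ else hne2.some with hfdef
    have hcard : (S.erase a).card ≤ (Finset.univ : Finset (Fin (k - 2))).card := by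
      apply Finset.card_le_card_of_injOn f (fun x _ => Finset.mem_univ _)
      intro x hx y hy hf
      by_contra hne
      have hxS := Finset.mem_of_mem_erase hx
      have hyS := Finset.mem_of_mem_erase hy
      have hadj : G.Adj x y := hcl x hxS y hyS hne
      have hindadj : (G.induce ({a, b}ᶜ : Set V)).Adj ⟨x, hmemT x hx⟩ ⟨y, hmemT y hy⟩ := hadj
      apply c.valid hindadj
      have e1 : f x = c ⟨x, hmemT x hx⟩ := dif_pos _
      have e2 : f y = c ⟨y, hmemT y hy⟩ := dif_pos _
      rw [← e1, ← e2, hf]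
    rw [Finset.card_erase_of_mem haS, hS, Finset.card_univ, Fintype.card_fin] at hcard
    omega




/-- If `G` is a non-complete double-critical `k`-chromatic graph, then `δ(G) ≥ k + 1`. -/
theorem double_critical_minDegree {V : Type} [Fintype V] (G : SimpleGraph V)
    [DecidableRel G.Adj] (k : ℕ) (hnc : G ≠ ⊤) (hdc : DoubleCritical G k) :
    k + 1 ≤ G.minDegree := by
  classical
  obtain ⟨hconn, hchi, hcrit⟩ := hdc
  -- a nonadjacent pair exists
  have hne : ∃ a b : V, a ≠ b ∧ ¬ G.Adj a b := by
    by_contra h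
    push_neg at h
    apply hnc
    ext a b
    simp only [top_adj]
    exact ⟨G.ne_of_adj, fun hab => h a b hab⟩
  obtain ⟨a₀, b₀, hab₀, hnadj₀⟩ := hne
  have hVne : Nonempty V := ⟨a₀⟩
  -- an adjacent pair from any vertex
  have hadj_of : ∀ v : V, ∃ u, G.Adj v u := by
    intro v
    rcases eq_or_ne v a₀ with rfl | hv
    · exact exists_adj_of_ne hconn hab₀
    · exact exists_adj_of_ne hconn hv
  -- k ≥ 3
  have hk3 : 3 ≤ k := by
    by_contra hk2
    push_neg at hk2
    obtain ⟨x, hx⟩ := hadj_of a₀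
    have h0 := hcrit a₀ x hx
    have hz : (k - 2 : ℕ) = 0 := by omega
    rw [hz] at h0
    have hE : IsEmpty ({a₀, x}ᶜ : Set V) :=
      isEmpty_of_chromaticNumber_eq_zero (by exact_mod_cast h0)
    have hall : ∀ y : V, y = a₀ ∨ y = x := by
      intro y
      by_contra h
      push_neg at h
      exact hE.false ⟨y, by simp [h.1, h.2]⟩
    apply hnc
    ext a b
    simp only [top_adj]
    refine ⟨G.ne_of_adj, fun hab => ?_⟩
    rcases hall a with rfl | rfl <;> rcases hall b with rfl | rfl
    · exact absurd rfl hab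
    · exact hx
    · exact hx.symm
    · exact absurd rfl hab
  -- colorability facts
  have hcol2 : ∀ u v : V, G.Adj u v → (G.induce ({u, v}ᶜ : Set V)).Colorable (k - 2) :=
    fun u v h => chromaticNumber_le_iff_colorable.mp (le_of_eq (hcrit u v h))
  -- the common-neighbor machinery
  have hmach : ∀ x v : V, G.Adj x v →
      ∃ M : Finset V, M.card = k - 2 ∧ M ⊆ (G.neighborFinset v).erase x ∧
        (∀ w ∈ M, G.Adj x w) ∧
        (∀ y, ∀ hy : y ∈ ({x, v}ᶜ : Set V), G.Adj v y → ¬ G.Adj x y →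
          ∃ w ∈ M, w ≠ y ∧ ¬ G.Adj w y) := by
    intro x v hxv
    obtain ⟨c⟩ := hcol2 x v hxv
    choose m hm hmu hmv hmc using fun α => commonNbr G hk3 hchi hxv c α
    have minj : Function.Injective m := by
      intro α β hab
      have h1 := hmc α
      have h2 := hmc β
      rw [← h1, ← h2]
      congr 1
      exact Subtype.ext hab
    refine ⟨Finset.image m Finset.univ, ?_, ?_, ?_, ?_⟩
    · rw [Finset.card_image_of_injective _ minj, Finset.card_univ, Fintype.card_fin]
    · intro w hw
      obtain ⟨α, _, rfl⟩ := Finset.mem_image.mp hw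
      rw [Finset.mem_erase, mem_neighborFinset]
      exact ⟨(G.ne_of_adj (hmu α)).symm, hmv α⟩
    · intro w hw
      obtain ⟨α, _, rfl⟩ := Finset.mem_image.mp hw
      exact hmu α
    · intro y hy hvy hxy
      refine ⟨m (c ⟨y, hy⟩), Finset.mem_image.mpr ⟨c ⟨y, hy⟩, Finset.mem_univ _, rfl⟩, ?_, ?_⟩
      · intro h
        exact hxy (h ▸ hmu (c ⟨y, hy⟩))
      · intro hadj
        have hind : (G.induce ({x, v}ᶜ : Set V)).Adj
            ⟨m (c ⟨y, hy⟩), hm (c ⟨y, hy⟩)⟩ ⟨y, hy⟩ := hadj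
        exact c.valid hind (hmc (c ⟨y, hy⟩))
  -- min degree bound
  apply le_minDegree_of_forall_le_degree
  intro v
  by_contra hdeg
  push_neg at hdeg
  have hdeg' : G.degree v ≤ k := by omega
  obtain ⟨u, huv⟩ := hadj_of v
  have huF : u ∈ G.neighborFinset v := (mem_neighborFinset G v u).mpr huv
  -- lower bound on degree
  have hdlow : ∀ x ∈ G.neighborFinset v, k - 2 ≤ ((G.neighborFinset v).erase x).card := by
    intro x hx
    obtain ⟨M, hMcard, hMsub, _, _⟩ := hmach x v ((mem_neighborFinset G v x).mp hx).symm
    calc k - 2 = M.card := hMcard.symm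
    _ ≤ _ := Finset.card_le_card hMsub
  have herase : ∀ x ∈ G.neighborFinset v,
      ((G.neighborFinset v).erase x).card = G.degree v - 1 := by
    intro x hx
    rw [Finset.card_erase_of_mem hx]
    rfl
  have hdk : G.degree v = k - 1 ∨ G.degree v = k := by
    have := hdlow u huF
    rw [herase u huF] at this
    omega
  rcases hdk with hcase | hcase
  · -- degree = k - 1 : closed neighborhood is a k-clique
    have hcliq : ∀ x ∈ G.neighborFinset v, ∀ w ∈ (G.neighborFinset v).erase x, G.Adj x w := by
      intro x hx w hw
      obtain ⟨M, hMcard, hMsub, hMadj, _⟩ := hmach x v ((mem_neighborFinset G v x).mp hx).symm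
      have heq : M = (G.neighborFinset v).erase x := by
        apply Finset.eq_of_subset_of_card_le hMsub
        rw [herase x hx, hcase, hMcard]
        omega
      rw [← heq] at hw
      exact hMadj w hw
    apply no_clique G hk3 hnc hconn hcol2 (insert v (G.neighborFinset v))
    · rw [Finset.card_insert_of_notMem (G.notMem_neighborFinset_self v)]
      rw [SimpleGraph.degree] at hcase
      omega
    · intro a ha b hb hab
      rcases Finset.mem_insert.mp ha with rfl | ha' <;>
        rcases Finset.mem_insert.mp hb with rfl | hb'
      · exact absurd rfl hab
      · exact (mem_neighborFinset G a b).mp hb'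
      · exact ((mem_neighborFinset G b a).mp ha').symm
      · exact hcliq a ha' b (Finset.mem_erase.mpr ⟨hab.symm, hb'⟩)
  · -- degree = k
    -- N(v) is not a clique
    have hnotcl : ¬ (∀ a ∈ G.neighborFinset v, ∀ b ∈ G.neighborFinset v, a ≠ b → G.Adj a b) := by
      intro h
      exact no_clique G hk3 hnc hconn hcol2 (G.neighborFinset v) hcase h
    push_neg at hnotcl
    obtain ⟨x, hxF, y, hyF, hxyne, hnxy⟩ := hnotcl
    -- claim M: no vertex of N(v) has two non-neighbors in N(v)
    have claimM : ∀ p ∈ G.neighborFinset v, ∀ q ∈ G.neighborFinset v,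
        ∀ r ∈ G.neighborFinset v, q ≠ p → r ≠ p → q ≠ r →
        ¬ G.Adj p q → ¬ G.Adj p r → False := by
      intro p hp q hq r hr hqp hrp hqr hnpq hnpr
      obtain ⟨M, hMcard, hMsub, hMadj, _⟩ := hmach p v ((mem_neighborFinset G v p).mp hp).symm
      have hqM : q ∉ M := fun h => hnpq (hMadj q h)
      have hrM : r ∉ M := fun h => hnpr (hMadj r h)
      have hsub : insert q (insert r M) ⊆ (G.neighborFinset v).erase p := by
        intro w hw
        rcases Finset.mem_insert.mp hw with rfl | hw'
        · exact Finset.mem_erase.mpr ⟨hqp, hq⟩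
        · rcases Finset.mem_insert.mp hw' with rfl | hw''
          · exact Finset.mem_erase.mpr ⟨hrp, hr⟩
          · exact hMsub hw''
      have hc := Finset.card_le_card hsub
      rw [Finset.card_insert_of_notMem (by
            simp only [Finset.mem_insert]
            push_neg
            exact ⟨hqr, hqM⟩),
          Finset.card_insert_of_notMem hrM, hMcard, herase p hp, hcase] at hc
      omega
    -- final contradiction
    have hxv : G.Adj x v := ((mem_neighborFinset G v x).mp hxF).symm
    obtain ⟨M, hMcard, hMsub, hMadj, hlast⟩ := hmach x v hxv
    have hyx : y ≠ x := hxyne.symm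
    have hyv : y ≠ v := G.ne_of_adj ((mem_neighborFinset G v y).mp hyF).symm
    have hymem : y ∈ ({x, v}ᶜ : Set V) := by simp [hyx, hyv]
    obtain ⟨w, hwM, hwy, hnwy⟩ :=
      hlast y hymem ((mem_neighborFinset G v y).mp hyF) hnxy
    have hwF : w ∈ G.neighborFinset v := Finset.mem_of_mem_erase (hMsub hwM)
    have hwx : w ≠ x := Finset.ne_of_mem_erase (hMsub hwM)
    exact claimM y hyF x hxF w hwF hxyne hwy hwx.symm (fun h => hnxy h.symm) (fun h => hnwy h.symm)
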